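/- Let V be a commutative unital ring and 𝔪 an idempotent ideal such that 𝔪̃ = 𝔪 ⊗_V 𝔪 is flat over V. Then the endofunctor M ↦ 𝔪̃ ⊗_V Hom_V(𝔪̃, M) on V-modules is exact: it preserves both kernels and cokernels of V-linear maps. -/

import Mathlib

open TensorProduct

variable {V : Type*} [CommRing V]

/-- 𝔪̃ = 𝔪 ⊗[V] 𝔪. -/
abbrev mTilde (𝔪 : Ideal V) : Type _ := ↥𝔪 ⊗[V] ↥𝔪

/-- The functor M ↦ 𝔪̃ ⊗_V Hom_V(𝔪̃, M) on morphisms: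
f : M → N induces 𝔪̃ ⊗ Hom(𝔪̃, M) → 𝔪̃ ⊗ Hom(𝔪̃, N) by postcomposition. -/
noncomputable def FF (𝔪 : Ideal V) {M N : Type*} [AddCommGroup M] [Module V M]
    [AddCommGroup N] [Module V N] (f : M →ₗ[V] N) :
    mTilde 𝔪 ⊗[V] (mTilde 𝔪 →ₗ[V] M) →ₗ[V] mTilde 𝔪 ⊗[V] (mTilde 𝔪 →ₗ[V] N) :=
  LinearMap.lTensor (mTilde 𝔪) (LinearMap.llcomp V (mTilde 𝔪) M N f)


/-- multiplication map 𝔪̃ → V -/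
noncomputable def mulM (𝔪 : Ideal V) : mTilde 𝔪 →ₗ[V] V :=
  TensorProduct.lift ((LinearMap.mul V V).compl₁₂ 𝔪.subtype 𝔪.subtype)

@[simp] lemma mulM_tmul (𝔪 : Ideal V) (x y : 𝔪) : mulM 𝔪 (x ⊗ₜ y) = (x : V) * (y : V) := rfl

lemma tensor_comm_smul (𝔪 : Ideal V) (a b x y : 𝔪) :
    ((a:V)*(b:V)) • (x ⊗ₜ[V] y) = ((x:V)*(y:V)) • (a ⊗ₜ[V] b) := by
  have h1 : ((a:V)*(b:V)) • x = ((b:V)*(x:V)) • a := Subtype.ext (by simp [smul_eq_mul]; ring)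
  have h2 : ((b:V)*(x:V)) • y = ((x:V)*(y:V)) • b := Subtype.ext (by simp [smul_eq_mul]; ring)
  calc ((a:V)*(b:V)) • (x ⊗ₜ[V] y) = (((a:V)*(b:V)) • x) ⊗ₜ[V] y := smul_tmul' _ _ _
    _ = ((((b:V)*(x:V)) • a)) ⊗ₜ[V] y := by rw [h1]
    _ = a ⊗ₜ[V] (((b:V)*(x:V)) • y) := smul_tmul _ _ _
    _ = a ⊗ₜ[V] (((x:V)*(y:V)) • b) := by rw [h2]
    _ = ((x:V)*(y:V)) • (a ⊗ₜ[V] b) := tmul_smul _ _ _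

lemma key_smul (𝔪 : Ideal V) {X : Type*} [AddCommGroup X] [Module V X]
    (a b : 𝔪) (φ : mTilde 𝔪 →ₗ[V] X) :
    ((a:V)*(b:V)) • φ = (mulM 𝔪).smulRight (φ (a ⊗ₜ b)) := by
  apply TensorProduct.ext'
  intro x y
  simp only [LinearMap.smul_apply, LinearMap.smulRight_apply, mulM_tmul]
  rw [← map_smul, ← map_smul, tensor_comm_smul]

lemma lemA (𝔪 : Ideal V) (hm : 𝔪 * 𝔪 = 𝔪) {W : Type*} [AddCommGroup W] [Module V W]
    (D : Submodule V W)
    (hD : ∀ a ∈ 𝔪, ∀ b ∈ 𝔪, ∀ w : W, (a*b) • w ∈ D)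
    (t : mTilde 𝔪 ⊗[V] W) :
    t ∈ LinearMap.range (LinearMap.lTensor (mTilde 𝔪) D.subtype) := by
  induction t with
  | zero => exact zero_mem _
  | add x y hx hy => exact add_mem hx hy
  | tmul s w =>
    induction s using TensorProduct.induction_on with
    | zero => rw [TensorProduct.zero_tmul]; exact zero_mem _
    | add s₁ s₂ h1 h2 => rw [TensorProduct.add_tmul]; exact add_mem h1 h2
    | tmul x y =>
      obtain ⟨x, hx⟩ := x
      obtain ⟨y, hy⟩ := y
      have key : ∀ u, u ∈ 𝔪 * 𝔪 → ∃ hu : u ∈ 𝔪, ∀ v, v ∈ 𝔪 * 𝔪 → ∃ hv : v ∈ 𝔪,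
          (((⟨u, hu⟩ : 𝔪) ⊗ₜ[V] (⟨v, hv⟩ : 𝔪)) ⊗ₜ[V] w) ∈
            LinearMap.range (LinearMap.lTensor (mTilde 𝔪) D.subtype) := by
        intro u hu'
        refine Submodule.mul_induction_on hu' ?_ ?_
        · intro a ha b hb
          refine ⟨Ideal.mul_mem_left _ a hb, ?_⟩
          intro v hv'
          refine Submodule.mul_induction_on hv' ?_ ?_
          · intro c hc d hd
            refine ⟨Ideal.mul_mem_left _ c hd, ?_⟩
            refine ⟨((⟨b, hb⟩ : 𝔪) ⊗ₜ[V] (⟨d, hd⟩ : 𝔪)) ⊗ₜ[V]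
              (⟨(a*c) • w, hD a ha c hc w⟩ : D), ?_⟩
            rw [LinearMap.lTensor_tmul]
            have e1 : ((⟨a*b, Ideal.mul_mem_left _ a hb⟩ : 𝔪)) = a • (⟨b, hb⟩ : 𝔪) :=
              Subtype.ext (by simp [smul_eq_mul])
            have e2 : ((⟨c*d, Ideal.mul_mem_left _ c hd⟩ : 𝔪)) = c • (⟨d, hd⟩ : 𝔪) :=
              Subtype.ext (by simp [smul_eq_mul])
            rw [e1, e2]
            calc ((⟨b, hb⟩ : 𝔪) ⊗ₜ[V] (⟨d, hd⟩ : 𝔪)) ⊗ₜ[V] (D.subtype ⟨(a*c) • w, _⟩)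
                = ((⟨b, hb⟩ : 𝔪) ⊗ₜ[V] (⟨d, hd⟩ : 𝔪)) ⊗ₜ[V] ((a*c) • w) := rfl
              _ = ((a*c) • ((⟨b, hb⟩ : 𝔪) ⊗ₜ[V] (⟨d, hd⟩ : 𝔪))) ⊗ₜ[V] w := (smul_tmul _ _ _).symm
              _ = ((a • (⟨b, hb⟩ : 𝔪)) ⊗ₜ[V] (c • (⟨d, hd⟩ : 𝔪))) ⊗ₜ[V] w := by
                  rw [mul_smul, ← tmul_smul, smul_tmul']
          · rintro v₁ v₂ ⟨hv1, p1⟩ ⟨hv2, p2⟩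
            refine ⟨add_mem hv1 hv2, ?_⟩
            have : ((⟨v₁ + v₂, add_mem hv1 hv2⟩ : 𝔪)) = (⟨v₁, hv1⟩ : 𝔪) + (⟨v₂, hv2⟩ : 𝔪) := rfl
            rw [this, TensorProduct.tmul_add, TensorProduct.add_tmul]
            exact add_mem p1 p2
        · rintro u₁ u₂ ⟨hu1, p1⟩ ⟨hu2, p2⟩
          refine ⟨add_mem hu1 hu2, ?_⟩
          intro v hv'
          obtain ⟨hv, q1⟩ := p1 v hv'
          obtain ⟨_, q2⟩ := p2 v hv'
          refine ⟨hv, ?_⟩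
          have : ((⟨u₁ + u₂, add_mem hu1 hu2⟩ : 𝔪)) = (⟨u₁, hu1⟩ : 𝔪) + (⟨u₂, hu2⟩ : 𝔪) := rfl
          rw [this, TensorProduct.add_tmul, TensorProduct.add_tmul]
          exact add_mem q1 q2
      obtain ⟨hu, h2⟩ := key x (by rw [hm]; exact hx)
      obtain ⟨hv, h3⟩ := h2 y (by rw [hm]; exact hy)
      exact h3

lemma lemB (𝔪 : Ideal V) (hm : 𝔪 * 𝔪 = 𝔪) {W₁ W₂ : Type*} [AddCommGroup W₁] [Module V W₁]
    [AddCommGroup W₂] [Module V W₂] (L : W₁ →ₗ[V] W₂)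
    (hL : ∀ a ∈ 𝔪, ∀ b ∈ 𝔪, ∀ w : W₂, (a*b) • w ∈ LinearMap.range L) :
    Function.Surjective (LinearMap.lTensor (mTilde 𝔪) L) := by
  intro t
  obtain ⟨s, hs⟩ := lemA 𝔪 hm (LinearMap.range L) hL t
  obtain ⟨u, hu⟩ := LinearMap.lTensor_surjective (mTilde 𝔪)
    (g := L.rangeRestrict) L.surjective_rangeRestrict s
  refine ⟨u, ?_⟩
  have : L = (LinearMap.range L).subtype ∘ₗ L.rangeRestrict :=
    (LinearMap.subtype_comp_codRestrict _ _ _).symm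
  rw [this, LinearMap.lTensor_comp, LinearMap.comp_apply, hu, hs]

/-- If 𝔪 is idempotent and 𝔪̃ = 𝔪 ⊗ 𝔪 is flat, then the endofunctor
M ↦ 𝔪̃ ⊗_V Hom_V(𝔪̃, M) is exact: it preserves injections, surjections,
and exactness of sequences (hence kernels and cokernels). -/
theorem stmt11 {V : Type u} [CommRing V] (𝔪 : Ideal V) (hm : 𝔪 * 𝔪 = 𝔪)
    (hflat : Module.Flat V (mTilde 𝔪)) :
    ∀ (M N P : Type u) [AddCommGroup M] [Module V M] [AddCommGroup N] [Module V N]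
      [AddCommGroup P] [Module V P] (f : M →ₗ[V] N) (g : N →ₗ[V] P),
      (Function.Injective f → Function.Injective (FF 𝔪 f)) ∧
      (Function.Surjective g → Function.Surjective (FF 𝔪 g)) ∧
      (Function.Exact f g → Function.Exact (FF 𝔪 f) (FF 𝔪 g)) := by
  haveI := hflat
  intro M N P _ _ _ _ _ _ f g
  refine ⟨?_, ?_, ?_⟩
  · -- injectivity
    intro hf
    apply Module.Flat.lTensor_preserves_injective_linearMap
    intro φ ψ h
    ext x y
    exact hf (LinearMap.congr_fun h (x ⊗ₜ y))
  · -- surjectivity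
    intro hg
    apply lemB 𝔪 hm
    intro a ha b hb φ
    obtain ⟨n, hn⟩ := hg (φ ((⟨a, ha⟩ : 𝔪) ⊗ₜ (⟨b, hb⟩ : 𝔪)))
    refine ⟨(mulM 𝔪).smulRight n, ?_⟩
    rw [show ((a : V) * b) • φ = (((⟨a, ha⟩ : 𝔪) : V) * ((⟨b, hb⟩ : 𝔪) : V)) • φ from rfl,
      key_smul 𝔪 ⟨a, ha⟩ ⟨b, hb⟩ φ]
    ext t
    simp [hn]
  · -- exactness
    intro hfg
    set H : Submodule V (mTilde 𝔪 →ₗ[V] N) := LinearMap.ker (LinearMap.llcomp V (mTilde 𝔪) N P g) with hH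
    have hland : ∀ φ : mTilde 𝔪 →ₗ[V] M, (LinearMap.llcomp V (mTilde 𝔪) M N f) φ ∈ H := by
      intro φ
      rw [hH, LinearMap.mem_ker]
      ext t
      simp [hfg.apply_apply_eq_zero]
    set L : (mTilde 𝔪 →ₗ[V] M) →ₗ[V] H :=
      (LinearMap.llcomp V (mTilde 𝔪) M N f).codRestrict H hland with hL
    have hFFf : FF 𝔪 f =
        (LinearMap.lTensor (mTilde 𝔪) H.subtype) ∘ₗ (LinearMap.lTensor (mTilde 𝔪) L) := by
      rw [← LinearMap.lTensor_comp, hL, LinearMap.subtype_comp_codRestrict]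
      rfl
    have hexact : Function.Exact (LinearMap.lTensor (mTilde 𝔪) H.subtype) (FF 𝔪 g) :=
      Module.Flat.lTensor_exact (mTilde 𝔪) (LinearMap.exact_subtype_ker_map _)
    have hsurj : Function.Surjective (LinearMap.lTensor (mTilde 𝔪) L) := by
      apply lemB 𝔪 hm
      intro a ha b hb w
      obtain ⟨φ, hφ⟩ := w
      have h0 : g (φ ((⟨a, ha⟩ : 𝔪) ⊗ₜ (⟨b, hb⟩ : 𝔪))) = 0 :=
        LinearMap.congr_fun (LinearMap.mem_ker.mp hφ) _
      obtain ⟨m, hmEq⟩ := (hfg _).mp h0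
      refine ⟨(mulM 𝔪).smulRight m, Subtype.ext ?_⟩
      show (LinearMap.llcomp V (mTilde 𝔪) M N f) ((mulM 𝔪).smulRight m) = ((a : V) * b) • φ
      rw [show ((a : V) * b) • φ = (((⟨a, ha⟩ : 𝔪) : V) * ((⟨b, hb⟩ : 𝔪) : V)) • φ from rfl,
        key_smul 𝔪 ⟨a, ha⟩ ⟨b, hb⟩ φ]
      ext t
      simp [hmEq]
    intro y
    constructor
    · intro hy
      obtain ⟨s, hs⟩ := (hexact y).mp hy
      obtain ⟨u, hu⟩ := hsurj s
      exact ⟨u, by rw [hFFf, LinearMap.comp_apply, hu, hs]⟩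
    · rintro ⟨u, rfl⟩
      rw [hFFf, LinearMap.comp_apply]
      exact (hexact _).mpr ⟨LinearMap.lTensor (mTilde 𝔪) L u, rfl⟩
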